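/- Branches of execution models induce well-founded inductions of instances: Let C be a CP-theory, ⟨T, I, E⟩ an execution model of C, s a node of T at depth n with root-to-s path s₀,…,sₙ = s, and σ a C-selection extending σ(s). Then the sequence (K_j)_{j=0}^{2n+1} is a well-founded induction of the instance C^σ. -/

import Mathlib

noncomputable section
open scoped Classical

namespace CP

/-- The three truth values. -/
inductive TV where
  | f | u | t
deriving DecidableEq

namespace TV

/-- Rank of a truth value in the truth order `f ≤_t u ≤_t t`. -/
def rank : TV → ℕ
  | f => 0
  | u => 1
  | t => 2

/-- Minimum in the truth order. -/
def tmin (a b : TV) : TV := if rank a ≤ rank b then a else b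

/-- Maximum in the truth order. -/
def tmax (a b : TV) : TV := if rank a ≤ rank b then b else a

/-- Kleene negation. -/
def tneg : TV → TV
  | f => t
  | u => u
  | t => f

/-- The precision order on truth values: `u ≤_p f` and `u ≤_p t` (and reflexivity). -/
def lep (a b : TV) : Prop := a = u ∨ a = b

end TV

/-- Pointwise precision order on three-valued interpretations. -/
def leP {A : Type} (ν ν' : A → TV) : Prop := ∀ a, TV.lep (ν a) (ν' a)

/-- Propositional formulas over a type `A` of atoms. -/
inductive Form (A : Type) where
  | atom : A → Form A
  | conj : Form A → Form A → Form A
  | disj : Form A → Form A → Form A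
  | neg  : Form A → Form A

namespace Form

variable {A : Type}

/-- Two-valued satisfaction of a formula in an interpretation (a set of atoms). -/
def sat (I : Set A) : Form A → Prop
  | .atom a => a ∈ I
  | .conj φ ψ => sat I φ ∧ sat I ψ
  | .disj φ ψ => sat I φ ∨ sat I ψ
  | .neg φ => ¬ sat I φ

/-- Kleene three-valued valuation of a formula. -/
def val (ν : A → TV) : Form A → TV
  | .atom a => ν a
  | .conj φ ψ => TV.tmin (val ν φ) (val ν ψ)
  | .disj φ ψ => TV.tmax (val ν φ) (val ν ψ)
  | .neg φ => TV.tneg (val ν φ)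

/-- A formula is positive if it contains no negation. -/
def Positive : Form A → Prop
  | .atom _ => True
  | .conj φ ψ => Positive φ ∧ Positive ψ
  | .disj φ ψ => Positive φ ∧ Positive ψ
  | .neg _ => False

/-- The set of atoms occurring in a formula. -/
def atoms : Form A → Set A
  | .atom a => {a}
  | .conj φ ψ => atoms φ ∪ atoms ψ
  | .disj φ ψ => atoms φ ∪ atoms ψ
  | .neg φ => atoms φ

/-- Atoms occurring under a number of negations of parity `b` (`true` = odd). -/
def atomsPar : Bool → Form A → Set A
  | b, .atom a => if b then ∅ else {a}
  | b, .conj φ ψ => atomsPar b φ ∪ atomsPar b ψ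
  | b, .disj φ ψ => atomsPar b φ ∪ atomsPar b ψ
  | b, .neg φ => atomsPar (!b) φ

/-- Atoms occurring within the scope of an odd number of negations. -/
def natoms (φ : Form A) : Set A := atomsPar true φ

end Form

/-- A CP-law: a nonempty head list of distinct atoms with probabilities in `(0,1]`
summing to at most `1`, together with a body formula. -/
structure CPLaw (A : Type) where
  head : List (A × ℝ)
  body : Form A
  head_ne : head ≠ []
  head_nodup : (head.map Prod.fst).Nodup
  head_pos : ∀ p ∈ head, 0 < p.2 ∧ p.2 ≤ 1
  head_sum : (head.map Prod.snd).sum ≤ 1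

namespace CPLaw

variable {A : Type}

/-- `head_At(r)`: the set of atoms occurring in the head of `r`. -/
def headAt (r : CPLaw A) : Set A := {a | a ∈ r.head.map Prod.fst}

/-- The sum `Σᵢ αᵢ` of the probabilities in the head of `r`. -/
def psum (r : CPLaw A) : ℝ := (r.head.map Prod.snd).sum

end CPLaw

/-- A probabilistic process: a finite rooted tree (given by a parent function with a
depth function ensuring well-foundedness), with an interpretation, an edge probability
and a path probability attached to each node, together with (for use in execution
models) a CP-law index `rule` attached to each node and, for each non-root node, the
`choice` in the head of the rule fired at its parent that it corresponds to
(`none` is the extra child carrying the leftover probability `1 - Σᵢ αᵢ`). -/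
structure Proc (A R : Type) where
  Node : Type
  [fintypeNode : Fintype Node]
  root : Node
  parent : Node → Node
  depth : Node → ℕ
  interp : Node → Set A
  prob : Node → ℝ
  pathProb : Node → ℝ
  rule : Node → R
  choice : Node → Option ℕ
  depth_root : depth root = 0
  depth_parent : ∀ s, s ≠ root → depth s = depth (parent s) + 1
  pathProb_root : pathProb root = 1
  pathProb_parent : ∀ s, s ≠ root → pathProb s = pathProb (parent s) * prob s

attribute [instance] Proc.fintypeNode

namespace Proc

variable {A R : Type} (W : Proc A R)

/-- `s'` is a child of `s`. -/
def isChild (s' s : W.Node) : Prop := s' ≠ W.root ∧ W.parent s' = s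

/-- `s` is a leaf. -/
def isLeaf (s : W.Node) : Prop := ∀ s', ¬ W.isChild s' s

/-- `strictAnc a b`: `a` is a strict ancestor of `b`. -/
def strictAnc (a b : W.Node) : Prop :=
  Relation.TransGen (fun y x => W.isChild y x) b a

end Proc

variable {A R : Type}

/-- `R_E(s)`: the CP-laws that have not fired at any strict ancestor of `s`. -/
def RE (W : Proc A R) (s : W.Node) : Set R :=
  {r | ∀ s', W.strictAnc s' s → W.rule s' ≠ r}

/-- The CP-law `E(s)` fires at the non-leaf node `s`: `s` has exactly one child for
each head element `(Aᵢ, αᵢ)` (with interpretation `I(s) ∪ {Aᵢ}` and edge probability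
`αᵢ`), plus exactly one extra child with unchanged interpretation and edge probability
`1 - Σᵢ αᵢ` in case `Σᵢ αᵢ < 1`. -/
def FiresAt (C : R → CPLaw A) (W : Proc A R) (s : W.Node) : Prop :=
  (∀ s', W.isChild s' s →
     (∀ i, W.choice s' = some i →
        ∃ h : i < (C (W.rule s)).head.length,
          W.interp s' = insert ((C (W.rule s)).head.get ⟨i, h⟩).1 (W.interp s) ∧
          W.prob s' = ((C (W.rule s)).head.get ⟨i, h⟩).2) ∧
     (W.choice s' = none →
        (C (W.rule s)).psum < 1 ∧ W.interp s' = W.interp s ∧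
          W.prob s' = 1 - (C (W.rule s)).psum)) ∧
  (∀ s₁ s₂, W.isChild s₁ s → W.isChild s₂ s → W.choice s₁ = W.choice s₂ → s₁ = s₂) ∧
  (∀ i, i < (C (W.rule s)).head.length → ∃ s', W.isChild s' s ∧ W.choice s' = some i) ∧
  ((C (W.rule s)).psum < 1 → ∃ s', W.isChild s' s ∧ W.choice s' = none)

/-- `⟨W, I, E⟩` is a weak execution model of the CP-theory `C`. -/
def IsWEM (C : R → CPLaw A) (W : Proc A R) : Prop :=
  W.interp W.root = (∅ : Set A) ∧
  (∀ s, s ≠ W.root → 0 ≤ W.prob s ∧ W.prob s ≤ 1) ∧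
  (∀ s, ¬ W.isLeaf s →
    (∑ s' ∈ Finset.univ.filter (fun s' => W.isChild s' s), W.prob s') = 1) ∧
  (∀ s, ¬ W.isLeaf s →
    W.rule s ∈ RE W s ∧ Form.sat (W.interp s) (C (W.rule s)).body ∧ FiresAt C W s) ∧
  (∀ l, W.isLeaf l → ∀ r ∈ RE W l, ¬ Form.sat (W.interp l) (C r).body)

/-- `ν 0, …, ν n` is a hypothetical derivation sequence at node `s`. -/
def IsHDS (C : R → CPLaw A) (W : Proc A R) (s : W.Node)
    (ν : ℕ → A → TV) (n : ℕ) : Prop :=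
  (∀ a, ν 0 a = if a ∈ W.interp s then TV.t else TV.f) ∧
  ∀ i, i < n → ∃ r ∈ RE W s,
    Form.val (ν i) (C r).body ≠ TV.f ∧
    (∀ p ∈ (C r).headAt, ν i p = TV.f → ν (i+1) p = TV.u) ∧
    (∀ p, ¬ (p ∈ (C r).headAt ∧ ν i p = TV.f) → ν (i+1) p = ν i p)

/-- The hypothetical derivation sequence `ν 0, …, ν n` at `s` is terminal. -/
def HDSTerminal (C : R → CPLaw A) (W : Proc A R) (s : W.Node)
    (ν : ℕ → A → TV) (n : ℕ) : Prop :=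
  ¬ ∃ r ∈ RE W s, Form.val (ν n) (C r).body ≠ TV.f ∧
      ∃ p ∈ (C r).headAt, ν n p = TV.f

/-- `⟨W, I, E⟩` is an execution model of `C`: a weak execution model in which, at every
non-leaf node, the body of the fired CP-law is not unknown in the potential of the
node (the common limit of all terminal hypothetical derivation sequences). -/
def IsExec (C : R → CPLaw A) (W : Proc A R) : Prop :=
  IsWEM C W ∧
  ∀ s, ¬ W.isLeaf s → ∀ ν n, IsHDS C W s ν n → HDSTerminal C W s ν n →
    Form.val (ν n) (C (W.rule s)).body ≠ TV.u

/-- `π_T`: the probability distribution on interpretations induced by a process. -/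
def piT (W : Proc A R) (J : Set A) : ℝ :=
  ∑ l ∈ Finset.univ.filter (fun l => W.isLeaf l ∧ W.interp l = J), W.pathProb l

/-- A `C`-selection: for each CP-law occurrence, either a head element (`some i`)
or the distinguished `∅` outcome (`none`), which carries probability `1 - Σᵢ αᵢ`. -/
abbrev Sel (C : R → CPLaw A) : Type := (r : R) → Option (Fin (C r).head.length)

/-- The probability `σ^α(r)` of the outcome selected for `r` by `σ`. -/
def selWeight (C : R → CPLaw A) (σ : Sel C) (r : R) : ℝ :=
  match σ r with
  | some i => ((C r).head.get i).2
  | none => 1 - (C r).psum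

/-- The probability `P(σ) = Π_{r ∈ C} σ^α(r)` of a `C`-selection. -/
def selProb [Fintype R] (C : R → CPLaw A) (σ : Sel C) : ℝ :=
  ∏ r, selWeight C σ r

/-- `σ` extends the partial selection `σ(s)` determined by the path from the root
to `s`: for every strict ancestor `s'` of `s`, `σ` assigns to the rule fired at `s'`
the head element corresponding to the child of `s'` lying on the path to `s`. -/
def ExtendsPathSel (C : R → CPLaw A) (W : Proc A R) (σ : Sel C) (s : W.Node) : Prop :=
  ∀ s' s'', W.strictAnc s' s → W.isChild s'' s' → (s'' = s ∨ W.strictAnc s'' s) →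
    (σ (W.rule s')).map Fin.val = W.choice s''

/-- `ν` updated to map `p` to true. -/
def updT {A : Type} (ν : A → TV) (p : A) : A → TV :=
  fun a => if a = p then TV.t else ν a

/-- One step of a well-founded induction for the logic program `P` (a family of
rules, each a pair of a head atom and a body formula): either make the head of a
rule with true body true, or make an unfounded set false. -/
def WFStep {A Q : Type} (P : Q → A × Form A) (ν ν' : A → TV) : Prop :=
  (∃ q, Form.val ν (P q).2 = TV.t ∧ ν' = updT ν (P q).1) ∨
  (∃ U : Set A, (∀ p ∈ U, ν p = TV.u) ∧
    (∀ p, ν' p = if p ∈ U then TV.f else ν p) ∧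
    (∀ q, (P q).1 ∈ U → Form.val ν' (P q).2 = TV.f))

/-- `ν 0, …, ν m` is a well-founded induction of the logic program `P`. -/
def IsWFI {A Q : Type} (P : Q → A × Form A) (ν : ℕ → A → TV) (m : ℕ) : Prop :=
  (∀ a, ν 0 a = TV.u) ∧ ∀ j, j < m → WFStep P (ν j) (ν (j+1))

/-- The well-founded induction with limit `ν m` is terminal: no further step yields a
strictly more precise interpretation. -/
def WFITerminal {A Q : Type} (P : Q → A × Form A) (ν : ℕ → A → TV) (m : ℕ) : Prop :=
  ∀ ν', WFStep P (ν m) ν' → leP (ν m) ν' → ν' = ν m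

/-- The instance `C^σ`: the logic program consisting of the rules
`σ^h(r) ← body(r)` for all `r` with `σ^h(r) ≠ ∅`. -/
def instProg (C : R → CPLaw A) (σ : Sel C) :
    {r : R // (σ r).isSome} → A × Form A :=
  fun q => (((C q.1).head.get ((σ q.1).get q.2)).1, (C q.1).body)

/-- The logic program `P` has an exact well-founded model equal to `J`: some terminal
well-founded induction of `P` has as its limit the total interpretation corresponding
to `J`. -/
def LimitIs {A Q : Type} (P : Q → A × Form A) (J : Set A) : Prop :=
  ∃ ν m, IsWFI P ν m ∧ WFITerminal P ν m ∧
    ∀ a, ν m a = if a ∈ J then TV.t else TV.f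

/-- The instance based semantics `μ_C`. -/
def muC [Fintype R] (C : R → CPLaw A) (J : Set A) : ℝ :=
  ∑ σ ∈ Finset.univ.filter (fun σ : Sel C => LimitIs (instProg C σ) J),
    selProb C σ

/-! ### Auxiliary lemmas for `branch_induces_wfi` -/

instance : Fintype TV :=
  ⟨{TV.f, TV.u, TV.t}, by intro x; cases x <;> simp⟩

theorem TV.lep_tmin : ∀ a b c d : TV, TV.lep a b → TV.lep c d →
    TV.lep (TV.tmin a c) (TV.tmin b d) := by
  intro a b c d hab hcd
  cases a <;> cases b <;> cases c <;> cases d <;>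
    simp_all [TV.lep, TV.tmin, TV.rank]

theorem TV.lep_tmax : ∀ a b c d : TV, TV.lep a b → TV.lep c d →
    TV.lep (TV.tmax a c) (TV.tmax b d) := by
  intro a b c d hab hcd
  cases a <;> cases b <;> cases c <;> cases d <;>
    simp_all [TV.lep, TV.tmax, TV.rank]

theorem TV.lep_tneg : ∀ a b : TV, TV.lep a b → TV.lep (TV.tneg a) (TV.tneg b) := by
  intro a b hab
  cases a <;> cases b <;> simp_all [TV.lep, TV.tneg]

theorem lep_val_mono {ν ν' : A → TV} (h : leP ν ν') :
    ∀ φ : Form A, TV.lep (Form.val ν φ) (Form.val ν' φ) := by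
  intro φ
  induction φ with
  | atom a => exact h a
  | conj φ ψ ihφ ihψ => exact TV.lep_tmin _ _ _ _ ihφ ihψ
  | disj φ ψ ihφ ihψ => exact TV.lep_tmax _ _ _ _ ihφ ihψ
  | neg φ ihφ => exact TV.lep_tneg _ _ ihφ

theorem val_twoval (I : Set A) (φ : Form A) :
    Form.val (fun a => if a ∈ I then TV.t else TV.f) φ =
      if Form.sat I φ then TV.t else TV.f := by
  induction φ with
  | atom a => by_cases ha : a ∈ I <;> simp [Form.val, Form.sat, ha]
  | conj φ ψ ihφ ihψ =>
      simp only [Form.val, Form.sat, ihφ, ihψ]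
      by_cases h1 : Form.sat I φ <;> by_cases h2 : Form.sat I ψ <;>
        simp [h1, h2, TV.tmin, TV.rank]
  | disj φ ψ ihφ ihψ =>
      simp only [Form.val, Form.sat, ihφ, ihψ]
      by_cases h1 : Form.sat I φ <;> by_cases h2 : Form.sat I ψ <;>
        simp [h1, h2, TV.tmax, TV.rank]
  | neg φ ihφ =>
      simp only [Form.val, Form.sat, ihφ]
      by_cases h1 : Form.sat I φ <;> simp [h1, TV.tneg]

theorem hds_t_iff {C : R → CPLaw A} {W : Proc A R} {s : W.Node}
    {ν : ℕ → A → TV} {m : ℕ} (h : IsHDS C W s ν m) :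
    ∀ i, i ≤ m → ∀ a, (ν i a = TV.t ↔ a ∈ W.interp s) := by
  intro i
  induction i with
  | zero =>
      intro _ a
      rw [h.1 a]
      by_cases ha : a ∈ W.interp s <;> simp [ha]
  | succ i ih =>
      intro hi a
      obtain ⟨r, hr, hval, hchg, hunch⟩ := h.2 i (by omega)
      by_cases hc : a ∈ (C r).headAt ∧ ν i a = TV.f
      · rw [hchg a hc.1 hc.2]
        constructor
        · intro hu; exact absurd hu (by decide)
        · intro ha
          have := (ih (by omega) a).mpr ha
          rw [hc.2] at this
          exact absurd this (by decide)
      · rw [hunch a hc]; exact ih (by omega) a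

theorem lim_lep_twoval {C : R → CPLaw A} {W : Proc A R} {s : W.Node}
    {ν : ℕ → A → TV} {m : ℕ} (h : IsHDS C W s ν m) :
    leP (ν m) (fun a => if a ∈ W.interp s then TV.t else TV.f) := by
  intro a
  show TV.lep (ν m a) (if a ∈ W.interp s then TV.t else TV.f)
  by_cases ha : a ∈ W.interp s
  · rw [if_pos ha]
    cases hh : ν m a
    · exact absurd ((hds_t_iff h m le_rfl a).mpr ha) (by rw [hh]; decide)
    · exact Or.inl rfl
    · exact Or.inr rfl
  · rw [if_neg ha]
    cases hh : ν m a
    · exact Or.inr rfl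
    · exact Or.inl rfl
    · exact absurd ((hds_t_iff h m le_rfl a).mp hh) ha

theorem val_lim_ne_f {C : R → CPLaw A} {W : Proc A R} {s : W.Node}
    {ν : ℕ → A → TV} {m : ℕ} (h : IsHDS C W s ν m) {φ : Form A}
    (hsat : Form.sat (W.interp s) φ) : Form.val (ν m) φ ≠ TV.f := by
  have h1 := lep_val_mono (lim_lep_twoval h) φ
  rw [val_twoval, if_pos hsat] at h1
  rcases h1 with h1 | h1 <;> simp [h1]

theorem head_ne_f {C : R → CPLaw A} {W : Proc A R} {s : W.Node}
    {ν : ℕ → A → TV} {m : ℕ} {r : R} {p : A}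
    (ht : HDSTerminal C W s ν m) (hr : r ∈ RE W s)
    (hval : Form.val (ν m) (C r).body ≠ TV.f)
    (hp : p ∈ (C r).headAt) : ν m p ≠ TV.f :=
  fun hf => ht ⟨r, hr, hval, p, hp, hf⟩

theorem RE_child_subset (W : Proc A R) {sch spar : W.Node}
    (h : W.isChild sch spar) : RE W sch ⊆ RE W spar := by
  intro r hr s' hanc
  exact hr s' (Relation.TransGen.head h hanc)

theorem child_lep {C : R → CPLaw A} {W : Proc A R} {spar sch : W.Node}
    {νp : ℕ → A → TV} {mp : ℕ} (hp : IsHDS C W spar νp mp)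
    (htp : HDSTerminal C W spar νp mp)
    (hch : W.isChild sch spar)
    (hsub : W.interp spar ⊆ W.interp sch)
    (hIin : ∀ a ∈ W.interp sch, νp mp a ≠ TV.f)
    {νc : ℕ → A → TV} {mc : ℕ} (hc : IsHDS C W sch νc mc) :
    ∀ j, j ≤ mc → leP (νp mp) (νc j) := by
  intro j
  induction j with
  | zero =>
      intro _ a
      rw [hc.1 a]
      by_cases ha : a ∈ W.interp sch
      · rw [if_pos ha]
        cases hh : νp mp a
        · exact absurd hh (hIin a ha)
        · exact Or.inl rfl
        · exact Or.inr rfl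
      · rw [if_neg ha]
        cases hh : νp mp a
        · exact Or.inr rfl
        · exact Or.inl rfl
        · exact absurd (hsub ((hds_t_iff hp mp le_rfl a).mp hh)) ha
  | succ j ih =>
      intro hj
      have ihj := ih (by omega)
      obtain ⟨r, hr, hval, hchg, hunch⟩ := hc.2 j (by omega)
      have hvalp : Form.val (νp mp) (C r).body ≠ TV.f := by
        intro hf
        rcases lep_val_mono ihj (C r).body with h1 | h1
        · rw [hf] at h1; exact absurd h1 (by decide)
        · rw [hf] at h1; exact hval h1.symm
      intro a
      by_cases hca : a ∈ (C r).headAt ∧ νc j a = TV.f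
      · rw [hchg a hca.1 hca.2]
        have hne : νp mp a ≠ TV.f :=
          head_ne_f htp (RE_child_subset W hch hr) hvalp hca.1
        rcases ihj a with h1 | h1
        · exact Or.inr h1
        · rw [hca.2] at h1; exact absurd h1 hne
      · rw [hunch a hca]; exact ihj a

/-- Branches of execution models induce well-founded inductions of instances: given a
node `s = path n` at depth `n` of an execution model, limits `nu i` of terminal
hypothetical derivation sequences at the nodes `path i` of the root-to-`s` path, and a
`C`-selection `σ` extending `σ(s)`, the interleaved sequence `K` (starting from the
all-unknown interpretation, with `K (2i+1) = ν_{sᵢ}` and `K (2i+2)` obtained from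
`ν_{sᵢ}` by making the selected head atom true, if any) is a well-founded induction of
the instance `C^σ` of length `2n+1`. -/
theorem branch_induces_wfi {A R : Type} [Fintype A] [Fintype R]
    (C : R → CPLaw A) (W : Proc A R) (h : IsExec C W)
    (n : ℕ) (path : Fin (n+1) → W.Node)
    (hpath0 : path 0 = W.root)
    (hpathstep : ∀ i : Fin n, W.isChild (path i.succ) (path i.castSucc))
    (σ : Sel C)
    (hσ : ∀ i : Fin n,
      (σ (W.rule (path i.castSucc))).map Fin.val = W.choice (path i.succ))
    (nu : Fin (n+1) → A → TV)
    (hnu : ∀ i : Fin (n+1), ∃ (seq : ℕ → A → TV) (m : ℕ),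
      IsHDS C W (path i) seq m ∧ HDSTerminal C W (path i) seq m ∧ seq m = nu i)
    (K : ℕ → A → TV)
    (hK0 : ∀ a, K 0 a = TV.u)
    (hKodd : ∀ i : Fin (n+1), K (2 * (i : ℕ) + 1) = nu i)
    (hKeven : ∀ i : Fin n, K (2 * (i : ℕ) + 2) =
      (match σ (W.rule (path i.castSucc)) with
       | some j =>
          updT (nu i.castSucc) (((C (W.rule (path i.castSucc))).head.get j).1)
       | none => nu i.castSucc)) :
    IsWFI (instProg C σ) K (2 * n + 1) := by
  classical
  obtain ⟨⟨hroot, hprobs, hsumc, hnode, hleaf⟩, hexec⟩ := h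
  -- ℕ-indexed versions of the path data
  let q : ℕ → W.Node := fun i => if h : i ≤ n then path ⟨i, by omega⟩ else W.root
  let nuq : ℕ → A → TV := fun i => if h : i ≤ n then nu ⟨i, by omega⟩ else nu 0
  have hqe : ∀ (i : ℕ) (hi : i ≤ n), q i = path ⟨i, by omega⟩ := fun i hi => dif_pos hi
  have hnuqe : ∀ (i : ℕ) (hi : i ≤ n), nuq i = nu ⟨i, by omega⟩ := fun i hi => dif_pos hi
  have hq0 : q 0 = W.root := by
    rw [hqe 0 (by omega), ← hpath0]
    exact congrArg path (Fin.ext (by simp))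
  have hstep' : ∀ (i : ℕ), i < n → W.isChild (q (i+1)) (q i) := by
    intro i hi
    rw [hqe i (by omega), hqe (i+1) (by omega)]
    exact hpathstep ⟨i, hi⟩
  have hσ' : ∀ (i : ℕ), i < n →
      (σ (W.rule (q i))).map Fin.val = W.choice (q (i+1)) := by
    intro i hi
    rw [hqe i (by omega), hqe (i+1) (by omega)]
    exact hσ ⟨i, hi⟩
  have hnu' : ∀ (i : ℕ), i ≤ n → ∃ (seq : ℕ → A → TV) (m : ℕ),
      IsHDS C W (q i) seq m ∧ HDSTerminal C W (q i) seq m ∧ seq m = nuq i := by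
    intro i hi
    rw [hqe i hi, hnuqe i hi]
    exact hnu ⟨i, by omega⟩
  have hKodd' : ∀ (i : ℕ), i ≤ n → K (2*i+1) = nuq i := by
    intro i hi
    rw [hnuqe i hi]
    exact hKodd ⟨i, by omega⟩
  have hKeS : ∀ (i : ℕ) (hi : i < n) (jx : Fin (C (W.rule (q i))).head.length),
      σ (W.rule (q i)) = some jx →
      K (2*i+2) = updT (nuq i) (((C (W.rule (q i))).head.get jx).1) := by
    intro i hi jx hjx
    have h1 := hKeven ⟨i, hi⟩
    have hcs : path (⟨i, hi⟩ : Fin n).castSucc = q i := (hqe i (by omega)).symm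
    obtain ⟨v, hveq⟩ : ∃ v : ℕ, jx.val = v := ⟨_, rfl⟩
    have hv : (σ (W.rule (q i))).map Fin.val = some v := by
      rw [hjx, ← hveq]; rfl
    rw [← hcs] at hv
    cases hs : σ (W.rule (path (⟨i, hi⟩ : Fin n).castSucc)) with
    | none => rw [hs] at hv; exact absurd hv (by simp)
    | some jy =>
        rw [hs] at hv h1
        have hvv : jy.val = jx.val := by rw [hveq]; simpa using hv
        have hl : (C (W.rule (q i))).head =
            (C (W.rule (path (⟨i, hi⟩ : Fin n).castSucc))).head := by rw [hcs]
        have hg : ((C (W.rule (q i))).head.get jx).1 =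
            ((C (W.rule (path (⟨i, hi⟩ : Fin n).castSucc))).head.get jy).1 := by
          simp only [List.get_eq_getElem]
          congr 1
          rw [getElem_congr_coll hl]
          exact getElem_congr_idx hvv.symm
        rw [hg, hnuqe i (by omega)]
        exact h1
  have hKeN : ∀ (i : ℕ) (hi : i < n), σ (W.rule (q i)) = none →
      K (2*i+2) = nuq i := by
    intro i hi hjx
    have h1 := hKeven ⟨i, hi⟩
    have hcs : path (⟨i, hi⟩ : Fin n).castSucc = q i := (hqe i (by omega)).symm
    have hv : (σ (W.rule (q i))).map Fin.val = none := by
      rw [hjx]; rfl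
    rw [← hcs] at hv
    cases hs : σ (W.rule (path (⟨i, hi⟩ : Fin n).castSucc)) with
    | some jy => rw [hs] at hv; exact absurd hv (by simp)
    | none =>
        rw [hs] at h1
        rw [hnuqe i (by omega)]
        exact h1
  -- basic facts about the nodes along the path
  have hnl : ∀ (i : ℕ), i < n → ¬ W.isLeaf (q i) :=
    fun i hi hL => hL (q (i+1)) (hstep' i hi)
  have hfire : ∀ (i : ℕ) (hi : i < n), FiresAt C W (q i) :=
    fun i hi => (hnode _ (hnl i hi)).2.2
  have hre : ∀ (i : ℕ) (hi : i < n), W.rule (q i) ∈ RE W (q i) :=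
    fun i hi => (hnode _ (hnl i hi)).1
  have hsat' : ∀ (i : ℕ) (hi : i < n),
      Form.sat (W.interp (q i)) (C (W.rule (q i))).body :=
    fun i hi => (hnode _ (hnl i hi)).2.1
  have hinterpS : ∀ (i : ℕ) (hi : i < n) (jx : Fin (C (W.rule (q i))).head.length),
      σ (W.rule (q i)) = some jx →
      W.interp (q (i+1)) = insert (((C (W.rule (q i))).head.get jx).1) (W.interp (q i)) := by
    intro i hi jx hjx
    have hchoice : W.choice (q (i+1)) = some jx.val := by
      have h2 := hσ' i hi
      rw [hjx] at h2
      exact h2.symm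
    obtain ⟨hlt, hI, -⟩ := ((hfire i hi).1 (q (i+1)) (hstep' i hi)).1 jx.val hchoice
    rw [hI]
  have hinterpN : ∀ (i : ℕ) (hi : i < n), σ (W.rule (q i)) = none →
      W.interp (q (i+1)) = W.interp (q i) := by
    intro i hi hjx
    have hchoice : W.choice (q (i+1)) = none := by
      have h2 := hσ' i hi
      rw [hjx] at h2
      exact h2.symm
    exact (((hfire i hi).1 (q (i+1)) (hstep' i hi)).2 hchoice).2.1
  have hsubstep : ∀ (i : ℕ), i < n → W.interp (q i) ⊆ W.interp (q (i+1)) := by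
    intro i hi
    cases hjx : σ (W.rule (q i)) with
    | none => rw [hinterpN i hi hjx]
    | some jx => rw [hinterpS i hi jx hjx]; exact Set.subset_insert _ _
  have hmono : ∀ (k i : ℕ), k ≤ i → i ≤ n →
      W.interp (q k) ⊆ W.interp (q i) := by
    intro k i
    induction i with
    | zero =>
        intro hk _
        have : k = 0 := by omega
        subst this
        exact subset_rfl
    | succ i ih =>
        intro hk hi
        rcases Nat.lt_or_ge k (i+1) with hlt | hge
        · exact (ih (by omega) (by omega)).trans (hsubstep i (by omega))
        · have : k = i + 1 := by omega
          subst this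
          exact subset_rfl
  have hnut : ∀ (i : ℕ) (hi : i ≤ n) (a : A),
      (nuq i a = TV.t ↔ a ∈ W.interp (q i)) := by
    intro i hi a
    obtain ⟨seq, m, hh, -, hlim⟩ := hnu' i hi
    have h1 := hds_t_iff hh m le_rfl a
    rw [hlim] at h1
    exact h1
  have hbody : ∀ (i : ℕ) (hi : i < n),
      Form.val (nuq i) (C (W.rule (q i))).body = TV.t := by
    intro i hi
    obtain ⟨seq, m, hh, ht, hlim⟩ := hnu' i (by omega)
    have h1 : Form.val (seq m) (C (W.rule (q i))).body ≠ TV.f :=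
      val_lim_ne_f hh (hsat' i hi)
    have h2 : Form.val (seq m) (C (W.rule (q i))).body ≠ TV.u :=
      hexec (q i) (hnl i hi) seq m hh ht
    rw [hlim] at h1 h2
    cases hv : Form.val (nuq i) (C (W.rule (q i))).body
    · exact absurd hv h1
    · exact absurd hv h2
    · rfl
  have hlep : ∀ (i : ℕ), i < n → leP (nuq i) (nuq (i+1)) := by
    intro i hi
    obtain ⟨seqp, mp, hhp, htp, hlimp⟩ := hnu' i (by omega)
    obtain ⟨seqc, mc, hhc, -, hlimc⟩ := hnu' (i+1) (by omega)
    have hIin : ∀ a ∈ W.interp (q (i+1)), seqp mp a ≠ TV.f := by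
      intro a ha
      cases hjx : σ (W.rule (q i)) with
      | none =>
          rw [hinterpN i hi hjx] at ha
          have h3 : seqp mp a = TV.t := (hds_t_iff hhp mp le_rfl a).mpr ha
          rw [h3]; decide
      | some jx =>
          rw [hinterpS i hi jx hjx] at ha
          rcases ha with rfl | ha
          · have hb : Form.val (seqp mp) (C (W.rule (q i))).body = TV.t := by
              rw [hlimp]; exact hbody i hi
            refine head_ne_f htp (hre i hi) ?_ ?_
            · rw [hb]; decide
            · exact List.mem_map_of_mem (f := Prod.fst)
                (((C (W.rule (q i))).head).get_mem jx)
          · have h3 : seqp mp a = TV.t := (hds_t_iff hhp mp le_rfl a).mpr ha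
            rw [h3]; decide
    have hchl := child_lep hhp htp (hstep' i hi) (hsubstep i hi) hIin hhc mc le_rfl
    intro a
    have h4 := hchl a
    rw [hlimp, hlimc] at h4
    exact h4
  -- ancestors of path nodes lie on the path
  have hanc : ∀ (i : ℕ), i ≤ n → ∀ s', W.strictAnc s' (q i) →
      ∃ k, k < i ∧ q k = s' := by
    intro i
    induction i with
    | zero =>
        intro _ s' hanc
        exfalso
        obtain ⟨b, hb, -⟩ := Relation.TransGen.head'_iff.mp hanc
        rw [hq0] at hb
        exact hb.1 rfl
    | succ i ih =>
        intro hi s' hanc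
        obtain ⟨b, hb, hrest⟩ := Relation.TransGen.head'_iff.mp hanc
        have hbq : b = q i := by
          rw [← hb.2, (hstep' i (by omega)).2]
        subst hbq
        rcases Relation.reflTransGen_iff_eq_or_transGen.mp hrest with rfl | htg
        · exact ⟨i, by omega, rfl⟩
        · obtain ⟨k, hk, hpk⟩ := ih (by omega) s' htg
          exact ⟨k, by omega, hpk⟩
  -- t-values and f-values of the even states K (2*i)
  have hKt : ∀ (i : ℕ) (hi : i ≤ n) (a : A),
      (K (2*i) a = TV.t ↔ a ∈ W.interp (q i)) := by
    intro i hi a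
    cases i with
    | zero =>
        rw [hq0, hroot]
        rw [show (2*0 : ℕ) = 0 from rfl, hK0 a]
        simp
    | succ i =>
        have hi' : i < n := by omega
        rw [show 2*(i+1) = 2*i+2 from by ring]
        cases hjx : σ (W.rule (q i)) with
        | none =>
            rw [hKeN i hi' hjx, hinterpN i hi' hjx]
            exact hnut i (by omega) a
        | some jx =>
            rw [hKeS i hi' jx hjx, hinterpS i hi' jx hjx]
            rcases eq_or_ne a (((C (W.rule (q i))).head.get jx).1) with rfl | hap
            · simp [updT]
            · simp only [updT, if_neg hap, Set.mem_insert_iff, hap, false_or]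
              exact hnut i (by omega) a
  have hKf : ∀ (i : ℕ) (hi : i ≤ n) (a : A),
      K (2*i) a = TV.f → nuq i a = TV.f := by
    intro i hi a hka
    cases i with
    | zero =>
        rw [show (2*0 : ℕ) = 0 from rfl, hK0 a] at hka
        exact absurd hka (by decide)
    | succ i =>
        have hi' : i < n := by omega
        rw [show 2*(i+1) = 2*i+2 from by ring] at hka
        have hf : nuq i a = TV.f := by
          cases hjx : σ (W.rule (q i)) with
          | none =>
              rw [hKeN i hi' hjx] at hka
              exact hka
          | some jx =>
              rw [hKeS i hi' jx hjx] at hka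
              by_cases hap : a = ((C (W.rule (q i))).head.get jx).1
              · rw [updT, if_pos hap] at hka
                exact absurd hka (by decide)
              · rw [updT, if_neg hap] at hka
                exact hka
        rcases hlep i hi' a with h1 | h1
        · rw [hf] at h1; exact absurd h1 (by decide)
        · rw [← h1]; exact hf
  -- the well-founded induction
  refine ⟨hK0, ?_⟩
  intro j hj
  rcases Nat.even_or_odd j with ⟨i, rfl⟩ | ⟨i, rfl⟩
  · -- even step : K (2*i) → K (2*i+1) = nuq i, an unfounded-set step
    have hi : i ≤ n := by omega
    rw [show i + i = 2*i from by ring, show 2*i+1 = 2*i+1 from rfl]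
    rw [hKodd' i hi]
    refine Or.inr ⟨{a | nuq i a = TV.f ∧ K (2*i) a = TV.u}, fun p hp => hp.2, ?_, ?_⟩
    · intro p
      by_cases hpU : p ∈ {a | nuq i a = TV.f ∧ K (2*i) a = TV.u}
      · rw [if_pos hpU]; exact hpU.1
      · rw [if_neg hpU]
        cases hk : K (2*i) p with
        | f => exact hKf i hi p hk
        | t => rw [(hnut i hi p).mpr ((hKt i hi p).mp hk)]
        | u =>
            cases hn : nuq i p with
            | f => exact absurd ⟨hn, hk⟩ hpU
            | u => rfl
            | t =>
                have := (hKt i hi p).mpr ((hnut i hi p).mp hn)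
                rw [hk] at this
                exact absurd this (by decide)
    · rintro ⟨r, hrs⟩ hqr
      simp only [instProg, Set.mem_setOf_eq] at hqr
      by_cases hrRE : r ∈ RE W (q i)
      · by_contra hvf
        obtain ⟨seq, m, hh, ht, hlim⟩ := hnu' i hi
        apply ht
        refine ⟨r, hrRE, ?_, ((C r).head.get ((σ r).get hrs)).1, ?_, ?_⟩
        · rw [hlim]
          exact hvf
        · exact List.mem_map_of_mem (f := Prod.fst)
            (((C r).head).get_mem ((σ r).get hrs))
        · rw [hlim]
          exact hqr.1
      · exfalso
        simp only [RE, Set.mem_setOf_eq, not_forall] at hrRE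
        obtain ⟨s', hanc', hrr⟩ := hrRE
        have hrr' : W.rule s' = r := not_not.mp hrr
        obtain ⟨k, hk, hpk⟩ := hanc i hi s' hanc'
        subst hrr'
        have hkn : k < n := by omega
        subst hpk
        have hch : W.choice (q (k+1)) = some (((σ (W.rule (q k))).get hrs)).val := by
          rw [← hσ' k hkn]
          conv_lhs => rw [(Option.some_get hrs).symm]
          rfl
        obtain ⟨hlt, hI, -⟩ :=
          (((hfire k hkn).1 (q (k+1)) (hstep' k hkn)).1 _ hch)
        have hmem : ((C (W.rule (q k))).head.get ((σ (W.rule (q k))).get hrs)).1 ∈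
            W.interp (q (k+1)) := by
          rw [hI]
          exact Set.mem_insert _ _
        have hmem' : ((C (W.rule (q k))).head.get ((σ (W.rule (q k))).get hrs)).1 ∈
            W.interp (q i) :=
          hmono (k+1) i (by omega) hi hmem
        have ht' := (hnut i hi _).mpr hmem'
        rw [hqr.1] at ht'
        exact absurd ht' (by decide)
  · -- odd step : K (2*i+1) = nuq i → K (2*i+2), a rule-application step
    have hi : i < n := by omega
    show WFStep (instProg C σ) (K (2*i+1)) (K (2*i+2))
    rw [hKodd' i (by omega)]
    cases hjx : σ (W.rule (q i)) with
    | none =>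
        rw [hKeN i hi hjx]
        refine Or.inr ⟨∅, fun p hp => absurd hp (Set.notMem_empty p), ?_,
          fun qr h' => absurd h' (Set.notMem_empty _)⟩
        intro p
        simp
    | some jx =>
        refine Or.inl ⟨⟨W.rule (q i), by rw [hjx]; rfl⟩, ?_, ?_⟩
        · exact hbody i hi
        · rw [hKeS i hi jx hjx]
          simp only [instProg]
          congr 2
          simp [hjx]

end CP
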